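/- For p ∈ [0,1] define S_1(p) ∈ [0,∞] by S_1(1) = 0, S_1(p) = k if p ∈ [1/(k+1), 1/k) for some integer k ≥ 1, and S_1(0) = ∞. For each integer n ≥ 1 define I_n(p) by I_n(1) = 0, I_n(p) = k if p ∈ [1/(k+1), 1/k) for some integer 1 ≤ k ≤ n−1, and I_n(p) = n otherwise. Then for every p ∈ [0,1], S_1(p) = sup_{δ>0} liminf_{n→∞} inf { I_n(q) : q ∈ [0,1], |q−p| < δ }. -/

import Mathlib

set_option maxHeartbeats 1000000
open Filter Set
open scoped ENNReal

private lemma aux_exists_interval {q : ℝ} (h0 : 0 < q) (h1 : q < 1) :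
    ∃ k : ℕ, 1 ≤ k ∧ 1 / ((k : ℝ) + 1) ≤ q ∧ q < 1 / (k : ℝ) := by
  have hq1 : 1 < 1 / q := by
    rw [lt_div_iff₀ h0]; linarith
  set c := ⌈1/q⌉₊ with hc
  have hc2 : 2 ≤ c := by
    have := Nat.lt_ceil.mpr (show ((1:ℕ):ℝ) < 1/q by push_cast; exact hq1)
    omega
  have hcast : ((c - 1 : ℕ) : ℝ) = (c : ℝ) - 1 := by
    push_cast [Nat.cast_sub (by omega : 1 ≤ c)]; ring
  have hcpos : (0:ℝ) < (c:ℝ) := by positivity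
  refine ⟨c - 1, by omega, ?_, ?_⟩
  · rw [hcast]
    have hle : 1 / q ≤ (c : ℝ) := Nat.le_ceil _
    rw [show (c:ℝ) - 1 + 1 = (c:ℝ) by ring, div_le_iff₀ hcpos]
    rw [div_le_iff₀ h0] at hle
    linarith
  · rw [hcast]
    have hlt : (c : ℝ) < 1 / q + 1 := by
      have := Nat.ceil_lt_add_one (le_of_lt (by positivity : (0:ℝ) < 1/q))
      exact this
    have hkpos : (0:ℝ) < (c:ℝ) - 1 := by
      have : (2:ℝ) ≤ (c:ℝ) := by exact_mod_cast hc2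
      linarith
    rw [lt_div_iff₀ hkpos]
    have : ((c:ℝ) - 1) < 1/q := by linarith
    rw [lt_div_iff₀ h0] at this
    linarith

private lemma aux_interval_unique {q : ℝ} {k k' : ℕ} (hk : 1 ≤ k) (hk' : 1 ≤ k')
    (h1 : 1 / ((k:ℝ) + 1) ≤ q) (h2 : q < 1 / (k:ℝ))
    (h3 : 1 / ((k':ℝ) + 1) ≤ q) (h4 : q < 1 / (k':ℝ)) : k = k' := by
  have hkpos : (0:ℝ) < (k:ℝ) := by exact_mod_cast hk
  have hk'pos : (0:ℝ) < (k':ℝ) := by exact_mod_cast hk'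
  have e1 : 1 / ((k:ℝ) + 1) < 1 / (k':ℝ) := lt_of_le_of_lt h1 h4
  have e2 : 1 / ((k':ℝ) + 1) < 1 / (k:ℝ) := lt_of_le_of_lt h3 h2
  have f1 : (k':ℝ) < (k:ℝ) + 1 := by
    rw [div_lt_div_iff₀ (by linarith) hk'pos] at e1; linarith
  have f2 : (k:ℝ) < (k':ℝ) + 1 := by
    rw [div_lt_div_iff₀ (by linarith) hkpos] at e2; linarith
  have g1 : k' < k + 1 := by exact_mod_cast f1
  have g2 : k < k' + 1 := by exact_mod_cast f2
  omega

private lemma aux_I_lower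
    (I : ℕ → ℝ → ℝ≥0∞)
    (hI_mid : ∀ n : ℕ, 1 ≤ n → ∀ k : ℕ, 1 ≤ k → k ≤ n - 1 → ∀ p : ℝ,
      1 / ((k : ℝ) + 1) ≤ p → p < 1 / (k : ℝ) → I n p = (k : ℝ≥0∞))
    (hI_else : ∀ n : ℕ, 1 ≤ n → ∀ p : ℝ, p ≠ 1 →
      (¬ ∃ k : ℕ, 1 ≤ k ∧ k ≤ n - 1 ∧ 1 / ((k : ℝ) + 1) ≤ p ∧ p < 1 / (k : ℝ)) →
      I n p = (n : ℝ≥0∞))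
    {n m : ℕ} (hm : 1 ≤ m) (hmn : m ≤ n) {q : ℝ} (hq0 : 0 ≤ q)
    (hq : q < 1 / (m:ℝ)) : (m:ℝ≥0∞) ≤ I n q := by
  have hn : 1 ≤ n := le_trans hm hmn
  have hmpos : (0:ℝ) < (m:ℝ) := by exact_mod_cast hm
  have hq1 : q < 1 := lt_of_lt_of_le hq (by
    rw [div_le_one hmpos]; exact_mod_cast hm)
  rcases eq_or_lt_of_le hq0 with h0 | h0
  · rw [← h0, hI_else n hn 0 (by norm_num) (by
      rintro ⟨k, hk1, _, hk3, _⟩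
      have : (0:ℝ) < 1/((k:ℝ)+1) := by positivity
      linarith)]
    exact_mod_cast hmn
  · obtain ⟨k, hk1, hk2, hk3⟩ := aux_exists_interval h0 hq1
    have hmk : m ≤ k := by
      have e : 1/((k:ℝ)+1) < 1/(m:ℝ) := lt_of_le_of_lt hk2 hq
      have hkpos : (0:ℝ) < (k:ℝ) := by exact_mod_cast hk1
      rw [div_lt_div_iff₀ (by linarith) hmpos] at e
      have : m < k + 1 := by exact_mod_cast (by linarith : (m:ℝ) < (k:ℝ) + 1)
      omega
    by_cases hkn : k ≤ n - 1
    · rw [hI_mid n hn k hk1 hkn q hk2 hk3]; exact_mod_cast hmk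
    · rw [hI_else n hn q (ne_of_lt hq1) (by
        rintro ⟨k', hk'1, hk'2, hk'3, hk'4⟩
        exact hkn ((aux_interval_unique hk1 hk'1 hk2 hk3 hk'3 hk'4) ▸ hk'2))]
      exact_mod_cast hmn

theorem rate_function_approximation
    (S₁ : ℝ → ℝ≥0∞)
    (hS₁_one : S₁ 1 = 0)
    (hS₁_mid : ∀ k : ℕ, 1 ≤ k → ∀ p : ℝ,
      1 / ((k : ℝ) + 1) ≤ p → p < 1 / (k : ℝ) → S₁ p = (k : ℝ≥0∞))
    (hS₁_zero : S₁ 0 = ⊤)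
    (I : ℕ → ℝ → ℝ≥0∞)
    (hI_one : ∀ n : ℕ, 1 ≤ n → I n 1 = 0)
    (hI_mid : ∀ n : ℕ, 1 ≤ n → ∀ k : ℕ, 1 ≤ k → k ≤ n - 1 → ∀ p : ℝ,
      1 / ((k : ℝ) + 1) ≤ p → p < 1 / (k : ℝ) → I n p = (k : ℝ≥0∞))
    (hI_else : ∀ n : ℕ, 1 ≤ n → ∀ p : ℝ, p ≠ 1 →
      (¬ ∃ k : ℕ, 1 ≤ k ∧ k ≤ n - 1 ∧ 1 / ((k : ℝ) + 1) ≤ p ∧ p < 1 / (k : ℝ)) →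
      I n p = (n : ℝ≥0∞)) :
    ∀ p ∈ Set.Icc (0:ℝ) 1,
      S₁ p = ⨆ (δ : ℝ) (_ : 0 < δ),
        Filter.liminf
          (fun n : ℕ =>
            sInf {v : ℝ≥0∞ | ∃ q ∈ Set.Icc (0:ℝ) 1, |q - p| < δ ∧ v = I n q})
          Filter.atTop := by
  intro p hp
  -- generic lower bound on liminf from lower bound on I over the ball
  have hliminf_ge : ∀ (δ : ℝ) (m : ℕ), 1 ≤ m →
      (∀ q ∈ Set.Icc (0:ℝ) 1, |q - p| < δ → q < 1 / (m:ℝ)) →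
      (m:ℝ≥0∞) ≤ Filter.liminf
        (fun n : ℕ =>
          sInf {v : ℝ≥0∞ | ∃ q ∈ Set.Icc (0:ℝ) 1, |q - p| < δ ∧ v = I n q})
        Filter.atTop := by
    intro δ m hm hball
    refine le_trans
      (le_of_eq (Filter.liminf_const (f := (Filter.atTop : Filter ℕ)) (m:ℝ≥0∞)).symm)
      (Filter.liminf_le_liminf ?_)
    refine Filter.eventually_atTop.mpr ⟨m, fun n hn => ?_⟩
    refine le_sInf ?_
    rintro v ⟨q, hq, hqd, rfl⟩
    exact aux_I_lower I hI_mid hI_else hm hn hq.1 (hball q hq hqd)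
  rcases eq_or_lt_of_le hp.1 with h0 | h0
  · -- p = 0
    subst h0
    rw [hS₁_zero]
    rw [eq_comm, eq_top_iff, ← ENNReal.iSup_natCast]
    refine iSup_le fun m => ?_
    rcases Nat.eq_zero_or_pos m with rfl | hm
    · simp
    refine le_iSup₂_of_le (1/(m:ℝ)) (by positivity) ?_
    refine hliminf_ge _ m hm fun q hq hqd => ?_
    rwa [sub_zero, abs_of_nonneg hq.1] at hqd
  rcases eq_or_lt_of_le hp.2 with h1 | h1
  · -- p = 1
    subst h1
    rw [hS₁_one, eq_comm]
    simp only [ENNReal.iSup_eq_zero]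
    intro δ hδ
    have hev : ∀ᶠ n in Filter.atTop, sInf {v : ℝ≥0∞ | ∃ q ∈ Set.Icc (0:ℝ) 1,
        |q - (1:ℝ)| < δ ∧ v = I n q} = 0 := by
      filter_upwards [Filter.eventually_ge_atTop 1] with n hn
      refine le_antisymm (sInf_le ⟨1, ⟨le_of_lt one_pos, le_refl 1⟩, by simpa, (hI_one n hn).symm⟩)
        zero_le
    rw [Filter.liminf_congr hev, Filter.liminf_const]
  · -- 0 < p < 1
    obtain ⟨k, hk1, hk2, hk3⟩ := aux_exists_interval h0 h1
    rw [hS₁_mid k hk1 p hk2 hk3]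
    refine le_antisymm ?_ ?_
    · -- k ≤ RHS, via δ = 1/k - p
      have hδpos : 0 < 1/(k:ℝ) - p := by linarith
      refine le_iSup₂_of_le (1/(k:ℝ) - p) hδpos ?_
      refine hliminf_ge _ k hk1 fun q hq hqd => ?_
      have := (abs_lt.mp hqd).2
      linarith
    · -- RHS ≤ k
      refine iSup₂_le fun δ hδ => ?_
      have hev : ∀ᶠ n in Filter.atTop, sInf {v : ℝ≥0∞ | ∃ q ∈ Set.Icc (0:ℝ) 1,
          |q - p| < δ ∧ v = I n q} ≤ (fun _ : ℕ => (k:ℝ≥0∞)) n := by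
        filter_upwards [Filter.eventually_ge_atTop (k+1)] with n hn
        have hn1 : 1 ≤ n := by omega
        have hkn : k ≤ n - 1 := by omega
        exact sInf_le ⟨p, hp, by simpa, (hI_mid n hn1 k hk1 hkn p hk2 hk3).symm⟩
      refine le_trans (Filter.liminf_le_liminf hev)
        (le_of_eq (Filter.liminf_const (f := (Filter.atTop : Filter ℕ)) (k:ℝ≥0∞)))
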